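/- Fix a positive integer S, reals P > 0, c > 0, X > 0, an index μ ∈ {0,…,S−1}, and set m := μP/S + P/(2S). Let h(t) := (X/(√(2π)·c))·exp(−(t−m)²/(2c²)) and h_ext(t) := Σ_{l∈ℤ} h(t+lP). Then ∫₀^P |h_ext(t) − 1_{[μP/S,(μ+1)P/S]}(t)·h(t)| dt = X·(1 − erf(P/(2√2·S·c))), where erf(x) := (2/√π)·∫₀^x e^{−u²} du and 1_{[a,b]} denotes the indicator function of the interval [a,b]. -/

import Mathlib

open MeasureTheory Set Real

/-- The error function `erf(x) = (2/√π)·∫₀^x e^{-u²} du`. -/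
noncomputable def erf (x : ℝ) : ℝ := (2 / Real.sqrt Real.pi) * ∫ u in (0:ℝ)..x, Real.exp (-u ^ 2)

/-- The `L¹` distance on `[0,P]` between the `P`-periodized Gaussian pulse
`h_ext` and its indicator-truncated counterpart `1_{[μP/S,(μ+1)P/S]}·h` equals
`X·(1 - erf(P/(2√2·S·c)))`. -/
theorem single_pulse_area_error (S : ℕ) (hS : 0 < S) (P c X : ℝ)
    (hP : 0 < P) (hc : 0 < c) (hX : 0 < X) (μ : ℕ) (hμ : μ < S)
    (m : ℝ) (hm : m = (μ : ℝ) * P / S + P / (2 * S))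
    (h : ℝ → ℝ)
    (hh : ∀ t, h t = (X / (Real.sqrt (2 * Real.pi) * c)) * Real.exp (-(t - m) ^ 2 / (2 * c ^ 2)))
    (hext : ℝ → ℝ) (hhext : ∀ t, hext t = ∑' l : ℤ, h (t + (l : ℝ) * P)) :
    (∫ t in (0:ℝ)..P,
      |hext t - Set.indicator (Set.Icc ((μ : ℝ) * P / S) (((μ : ℝ) + 1) * P / S)) h t|)
      = X * (1 - erf (P / (2 * Real.sqrt 2 * S * c))) := by
  have hSR : (0:ℝ) < (S:ℝ) := by exact_mod_cast hS
  have hc2 : (0:ℝ) < c ^ 2 := by positivity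
  set a : ℝ := (μ : ℝ) * P / (S:ℝ) with ha_def
  set b : ℝ := ((μ : ℝ) + 1) * P / (S:ℝ) with hb_def
  set d : ℝ := P / (2 * Real.sqrt 2 * (S:ℝ) * c) with hd_def
  clear_value a b d
  -- basic facts about a, b
  have ha0 : 0 ≤ a := by rw [ha_def]; positivity
  have hab : a ≤ b := by
    rw [ha_def, hb_def]
    gcongr
    linarith
  have hbP : b ≤ P := by
    rw [hb_def, div_le_iff₀ hSR]
    have hμ1 : ((μ:ℝ) + 1) ≤ (S:ℝ) := by exact_mod_cast Nat.succ_le_of_lt hμ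
    nlinarith
  have ham : a = m - P / (2 * S) := by rw [hm, ha_def]; ring
  have hbm : b = m + P / (2 * S) := by
    rw [hm, hb_def, ha_def]
    field_simp
    ring
  -- relate h to the Gaussian pdf
  set v : NNReal := ⟨c ^ 2, sq_nonneg c⟩ with hv_def
  have hvcoe : (v : ℝ) = c ^ 2 := rfl
  have hvne : v ≠ 0 := by
    intro h0
    have : (v : ℝ) = 0 := by rw [h0]; simp
    rw [hvcoe] at this
    exact absurd this (by positivity)
  have hsq2pc : Real.sqrt (2 * Real.pi * c ^ 2) = Real.sqrt (2 * Real.pi) * c := by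
    rw [Real.sqrt_mul (by positivity : (0:ℝ) ≤ 2 * Real.pi), Real.sqrt_sq hc.le]
  have hpdf : ∀ t, h t = X * ProbabilityTheory.gaussianPDFReal m v t := by
    intro t
    rw [hh, ProbabilityTheory.gaussianPDFReal, hvcoe, hsq2pc, div_eq_mul_inv]
    ring
  have hnn : ∀ t, 0 ≤ h t := fun t => by
    rw [hh]; positivity
  have hInt : Integrable h := by
    have : Integrable (fun t => X * ProbabilityTheory.gaussianPDFReal m v t) :=
      (ProbabilityTheory.integrable_gaussianPDFReal m v).const_mul X
    exact this.congr (Filter.EventuallyEq.of_eq (funext fun t => (hpdf t).symm))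
  have hIX : (∫ t, h t) = X := by
    calc (∫ t, h t) = ∫ t, X * ProbabilityTheory.gaussianPDFReal m v t :=
          integral_congr_ae (Filter.EventuallyEq.of_eq (funext hpdf))
      _ = X * ∫ t, ProbabilityTheory.gaussianPDFReal m v t := integral_const_mul _ _
      _ = X := by rw [ProbabilityTheory.integral_gaussianPDFReal_eq_one m hvne, mul_one]
  -- pointwise summability of the periodization
  have hsum : ∀ t : ℝ, Summable fun l : ℤ => h (t + (l : ℝ) * P) := by
    intro t
    simp only [hh]
    apply Summable.mul_left
    have hT : 0 < P ^ 2 / (2 * Real.pi * c ^ 2) := by positivity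
    have hbnd := summable_pow_mul_jacobiTheta₂_term_bound
      (P * |t - m| / (2 * Real.pi * c ^ 2)) hT 0
    simp only [pow_zero, one_mul] at hbnd
    push_cast at hbnd
    refine hbnd.of_nonneg_of_le (fun l => (Real.exp_pos _).le) (fun l => ?_)
    rw [Real.exp_le_exp]
    have key : -Real.pi * (P ^ 2 / (2 * Real.pi * c ^ 2) * (l:ℝ) ^ 2
          - 2 * (P * |t - m| / (2 * Real.pi * c ^ 2)) * |(l:ℝ)|)
        = (-(P ^ 2 * (l:ℝ) ^ 2) + 2 * P * |t - m| * |(l:ℝ)|) / (2 * c ^ 2) := by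
      have hπ : Real.pi ≠ 0 := Real.pi_ne_zero
      field_simp
      ring
    rw [key]
    gcongr
    have habs' : -(|t - m| * |(l:ℝ)| * P) ≤ (t - m) * (l:ℝ) * P := by
      have h1 := neg_abs_le ((t - m) * (l:ℝ) * P)
      rwa [abs_mul, abs_mul, abs_of_pos hP] at h1
    nlinarith [sq_nonneg (t - m), habs']
  -- the indicator is below the periodization
  have hind_le : ∀ t, Set.indicator (Icc a b) h t ≤ h t := by
    intro t
    by_cases ht : t ∈ Icc a b
    · rw [Set.indicator_of_mem ht]
    · rw [Set.indicator_of_notMem ht]; exact hnn t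
  have hle : ∀ t, Set.indicator (Icc a b) h t ≤ hext t := by
    intro t
    refine (hind_le t).trans ?_
    rw [hhext]
    have := Summable.le_tsum (hsum t) 0 (fun l _ => hnn _)
    simpa using this
  have habs : ∀ t, |hext t - Set.indicator (Icc a b) h t|
      = hext t - Set.indicator (Icc a b) h t :=
    fun t => abs_of_nonneg (sub_nonneg.2 (hle t))
  -- sum of the integrals of the translates is X
  have hHS : HasSum (fun l : ℤ => ∫ t in Ioc (0:ℝ) P, h (t + (l:ℝ) * P)) X := by
    have hU : (⋃ l : ℤ, Ioc (l • P) ((l + 1) • P)) = (univ : Set ℝ) := iUnion_Ioc_zsmul hP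
    have hIU : IntegrableOn h (⋃ l : ℤ, Ioc (l • P) ((l + 1) • P)) := by
      rw [hU]; exact hInt.integrableOn
    have H := hasSum_integral_iUnion (fun l : ℤ => measurableSet_Ioc)
      (pairwise_disjoint_Ioc_zsmul P) hIU
    rw [hU, setIntegral_univ, hIX] at H
    have heq : (fun l : ℤ => ∫ t in Ioc (0:ℝ) P, h (t + (l:ℝ) * P))
        = fun l : ℤ => ∫ t in Ioc (l • P) ((l + 1) • P), h t := by
      funext l
      have hset : (Ioc (l • P) ((l + 1) • P) : Set ℝ) = Ioc ((0:ℝ) + (l:ℝ) * P) (P + (l:ℝ) * P) := by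
        congr 1 <;> simp [zsmul_eq_mul] <;> push_cast <;> ring
      rw [hset, ← intervalIntegral.integral_of_le (by linarith : (0:ℝ) + (l:ℝ)*P ≤ P + (l:ℝ)*P),
        ← intervalIntegral.integral_comp_add_right h ((l:ℝ) * P),
        intervalIntegral.integral_of_le hP.le]
    rw [heq]
    exact H
  -- value of the indicator's integral
  have hind_val : (∫ t in Ioc (0:ℝ) P, Set.indicator (Icc a b) h t) = X * erf d := by
    have hae : (Ioc (0:ℝ) P ∩ Icc a b : Set ℝ) =ᵐ[volume] (Ioc a b : Set ℝ) := by
      rw [MeasureTheory.ae_eq_set]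
      constructor
      · refine measure_mono_null (fun x hx => ?_) (measure_singleton a)
        have hxI : x ∈ Icc a b \ Ioc a b := ⟨hx.1.2, hx.2⟩
        rwa [Icc_sdiff_Ioc_same hab] at hxI
      · refine measure_mono_null (fun x hx => absurd ?_ hx.2) (measure_empty)
        exact ⟨⟨lt_of_le_of_lt ha0 hx.1.1, le_trans hx.1.2 hbP⟩, ⟨hx.1.1.le, hx.1.2⟩⟩
    rw [setIntegral_indicator measurableSet_Icc, setIntegral_congr_set hae,
      ← intervalIntegral.integral_of_le hab]
    -- now compute the interval integral of the Gaussian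
    have hs2 : Real.sqrt 2 ≠ 0 := by positivity
    have hsπ : Real.sqrt Real.pi ≠ 0 := by positivity
    have e0 : (∫ t in a..b, h t)
        = (X / (Real.sqrt (2 * Real.pi) * c)) *
          ∫ t in a..b, Real.exp (-(t - m) ^ 2 / (2 * c ^ 2)) := by
      simp only [hh]
      exact intervalIntegral.integral_const_mul _ _
    have e1 : (∫ t in a..b, Real.exp (-(t - m) ^ 2 / (2 * c ^ 2)))
        = ∫ t in (-(P/(2*(S:ℝ))))..(P/(2*(S:ℝ))), Real.exp (-t ^ 2 / (2 * c ^ 2)) := by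
      rw [intervalIntegral.integral_comp_sub_right
        (fun u => Real.exp (-u ^ 2 / (2 * c ^ 2))) m]
      congr 1
      · rw [ham]; ring
      · rw [hbm]; ring
    have hcont : Continuous fun u : ℝ => Real.exp (-u ^ 2 / (2 * c ^ 2)) :=
      (((continuous_pow 2).neg).div_const _).rexp
    have hi1 : IntervalIntegrable (fun u : ℝ => Real.exp (-u ^ 2 / (2 * c ^ 2)))
        volume (-(P/(2*(S:ℝ)))) 0 := hcont.intervalIntegrable _ _
    have hi2 : IntervalIntegrable (fun u : ℝ => Real.exp (-u ^ 2 / (2 * c ^ 2)))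
        volume 0 (P/(2*(S:ℝ))) := hcont.intervalIntegrable _ _
    have e2half : (∫ t in (-(P/(2*(S:ℝ))))..(0:ℝ), Real.exp (-t ^ 2 / (2 * c ^ 2)))
        = ∫ t in (0:ℝ)..(P/(2*(S:ℝ))), Real.exp (-t ^ 2 / (2 * c ^ 2)) := by
      have := intervalIntegral.integral_comp_neg (a := (0:ℝ)) (b := P/(2*(S:ℝ)))
        (fun u => Real.exp (-u ^ 2 / (2 * c ^ 2)))
      simp only [neg_neg, neg_sq, neg_zero] at this
      rw [← this]
    have e2 : (∫ t in (-(P/(2*(S:ℝ))))..(P/(2*(S:ℝ))), Real.exp (-t ^ 2 / (2 * c ^ 2)))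
        = 2 * ∫ t in (0:ℝ)..(P/(2*(S:ℝ))), Real.exp (-t ^ 2 / (2 * c ^ 2)) := by
      rw [← intervalIntegral.integral_add_adjacent_intervals hi1 hi2, e2half]
      ring
    have hk : ((Real.sqrt 2 * c)⁻¹ : ℝ) ≠ 0 := by positivity
    have h2c : ((Real.sqrt 2 * c) : ℝ) ^ 2 = 2 * c ^ 2 := by
      rw [mul_pow, Real.sq_sqrt (by norm_num : (0:ℝ) ≤ 2)]
    have e3 : (∫ t in (0:ℝ)..(P/(2*(S:ℝ))), Real.exp (-t ^ 2 / (2 * c ^ 2)))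
        = (Real.sqrt 2 * c) * ∫ u in (0:ℝ)..d, Real.exp (-u ^ 2) := by
      have lhs_eq : (∫ t in (0:ℝ)..(P/(2*(S:ℝ))), Real.exp (-t ^ 2 / (2 * c ^ 2)))
          = ∫ t in (0:ℝ)..(P/(2*(S:ℝ))),
              Real.exp (-(t * (Real.sqrt 2 * c)⁻¹) ^ 2) := by
        apply intervalIntegral.integral_congr
        intro t _
        have hts : (t * (Real.sqrt 2 * c)⁻¹) ^ 2 = t ^ 2 / (2 * c ^ 2) := by
          rw [mul_pow, inv_pow, h2c, div_eq_mul_inv]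
        exact congrArg Real.exp (by rw [hts, neg_div])
      rw [lhs_eq]
      have hcm : (∫ t in (0:ℝ)..(P/(2*(S:ℝ))),
            Real.exp (-(t * (Real.sqrt 2 * c)⁻¹) ^ 2))
          = ((Real.sqrt 2 * c)⁻¹)⁻¹ • ∫ u in ((0:ℝ) * (Real.sqrt 2 * c)⁻¹)..((P/(2*(S:ℝ))) * (Real.sqrt 2 * c)⁻¹),
              Real.exp (-u ^ 2) :=
        intervalIntegral.integral_comp_mul_right (fun u => Real.exp (-u ^ 2)) hk
      rw [hcm, inv_inv, smul_eq_mul, zero_mul]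
      congr 1
      rw [show P/(2*(S:ℝ)) * (Real.sqrt 2 * c)⁻¹ = d from by
        rw [hd_def, div_eq_mul_inv, div_eq_mul_inv, mul_assoc, ← mul_inv]
        congr 2
        ring]
    rw [e0, e1, e2, e3, erf]
    rw [show Real.sqrt (2 * Real.pi) = Real.sqrt 2 * Real.sqrt Real.pi from
      Real.sqrt_mul (by norm_num) _]
    field_simp
  -- set up the term-by-term decomposition
  have hBint : ∀ l : ℤ, IntegrableOn
      (fun t => if l = 0 then Set.indicator (Icc a b) h t else 0) (Ioc (0:ℝ) P) := by
    intro l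
    by_cases hl : l = 0
    · simp only [hl, if_true]
      exact (hInt.indicator measurableSet_Icc).integrableOn
    · simp only [hl, if_false]
      exact (integrable_zero _ _ _)
  have hGint : ∀ l : ℤ, IntegrableOn
      (fun t => h (t + (l:ℝ) * P) - (if l = 0 then Set.indicator (Icc a b) h t else 0))
      (Ioc (0:ℝ) P) := fun l =>
    ((hInt.comp_add_right _).integrableOn).sub (hBint l)
  have hGnn : ∀ (l : ℤ) (t : ℝ),
      0 ≤ h (t + (l:ℝ) * P) - (if l = 0 then Set.indicator (Icc a b) h t else 0) := by
    intro l t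
    by_cases hl : l = 0
    · simp only [hl, if_true]
      refine sub_nonneg.2 ?_
      have := hind_le t
      simpa [hl] using this
    · simp only [hl, if_false, sub_zero]
      exact hnn _
  have hGle : ∀ (l : ℤ) (t : ℝ),
      h (t + (l:ℝ) * P) - (if l = 0 then Set.indicator (Icc a b) h t else 0)
        ≤ h (t + (l:ℝ) * P) := by
    intro l t
    by_cases hl : l = 0
    · simp only [hl, if_true]
      refine sub_le_self _ ?_
      exact Set.indicator_nonneg (fun x _ => hnn x) t
    · simp [hl]
  have hGsum : Summable (fun l : ℤ => ∫ t in Ioc (0:ℝ) P,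
      ‖h (t + (l:ℝ) * P) - (if l = 0 then Set.indicator (Icc a b) h t else 0)‖) := by
    have heq : ∀ l : ℤ, (∫ t in Ioc (0:ℝ) P,
        ‖h (t + (l:ℝ) * P) - (if l = 0 then Set.indicator (Icc a b) h t else 0)‖)
        = ∫ t in Ioc (0:ℝ) P,
          (h (t + (l:ℝ) * P) - (if l = 0 then Set.indicator (Icc a b) h t else 0)) := by
      intro l
      refine integral_congr_ae (Filter.EventuallyEq.of_eq (funext fun t => ?_))
      rw [Real.norm_eq_abs, abs_of_nonneg (hGnn l t)]
    simp only [heq]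
    refine Summable.of_nonneg_of_le
      (fun l => setIntegral_nonneg measurableSet_Ioc fun t _ => hGnn l t)
      (fun l => setIntegral_mono_on (hGint l) ((hInt.comp_add_right _).integrableOn)
        measurableSet_Ioc fun t _ => hGle l t)
      hHS.summable
  have hswap := integral_tsum_of_summable_integral_norm hGint hGsum
  have htsumG : ∀ t : ℝ, (∑' l : ℤ,
      (h (t + (l:ℝ) * P) - (if l = 0 then Set.indicator (Icc a b) h t else 0)))
      = hext t - Set.indicator (Icc a b) h t := by
    intro t
    rw [Summable.tsum_sub (hsum t) ((hasSum_ite_eq (0:ℤ) _).summable), hhext t, tsum_ite_eq]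
  -- put everything together
  calc (∫ t in (0:ℝ)..P, |hext t - Set.indicator (Icc a b) h t|)
      = ∫ t in (0:ℝ)..P, (hext t - Set.indicator (Icc a b) h t) := by
        simp only [habs]
    _ = ∫ t in Ioc (0:ℝ) P, (hext t - Set.indicator (Icc a b) h t) :=
        intervalIntegral.integral_of_le hP.le
    _ = ∫ t in Ioc (0:ℝ) P, ∑' l : ℤ,
          (h (t + (l:ℝ) * P) - (if l = 0 then Set.indicator (Icc a b) h t else 0)) := by
        refine integral_congr_ae (Filter.EventuallyEq.of_eq (funext fun t => ?_))
        rw [htsumG]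
    _ = ∑' l : ℤ, ∫ t in Ioc (0:ℝ) P,
          (h (t + (l:ℝ) * P) - (if l = 0 then Set.indicator (Icc a b) h t else 0)) :=
        hswap.symm
    _ = ∑' l : ℤ, ((∫ t in Ioc (0:ℝ) P, h (t + (l:ℝ) * P))
          - (if l = 0 then ∫ t in Ioc (0:ℝ) P, Set.indicator (Icc a b) h t else 0)) := by
        refine tsum_congr fun l => ?_
        rw [integral_sub ((hInt.comp_add_right _).integrableOn) (hBint l)]
        congr 1
        by_cases hl : l = 0 <;> simp [hl]
    _ = X - ∫ t in Ioc (0:ℝ) P, Set.indicator (Icc a b) h t := by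
        rw [Summable.tsum_sub hHS.summable ((hasSum_ite_eq (0:ℤ) _).summable),
          hHS.tsum_eq, tsum_ite_eq]
    _ = X - X * erf d := by rw [hind_val]
    _ = X * (1 - erf d) := by ring
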